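/- For every x ∈ (0, π/2), the function (x/sin x)² + x/tan x admits the convergent series representation (x/sin x)² + x/tan x = 2 + Σ_{k=2}^{∞} (|B_{2k}|·(2k-2)·4^k/(2k)!)·x^{2k}, where every coefficient |B_{2k}|·(2k-2)·4^k/(2k)! is positive for k ≥ 2. -/

import Mathlib

open Real Finset

/-- The coefficient `|B_{2k}|·(2k-2)·4^k/(2k)!`, where `B_{2k}` is a Bernoulli number. -/
noncomputable def wchE (k : ℕ) : ℝ :=
  |((bernoulli (2 * k) : ℚ) : ℝ)| * (2 * (k : ℝ) - 2) * (4 : ℝ) ^ k /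
    (Nat.factorial (2 * k) : ℝ)

lemma bern_sign {k : ℕ} (hk : k ≠ 0) :
    0 < (-1 : ℝ) ^ (k + 1) * ((bernoulli (2 * k) : ℚ) : ℝ) := by
  have h := hasSum_zeta_nat hk
  have h1 : (1 : ℝ) ≤ (-1 : ℝ) ^ (k + 1) * (2 : ℝ) ^ (2 * k - 1) * π ^ (2 * k) *
      ((bernoulli (2 * k) : ℚ) : ℝ) / ((2 * k).factorial : ℝ) := by
    have := le_hasSum h 1 (fun i _ => by positivity)
    simpa using this
  have hc : (0 : ℝ) < (2 : ℝ) ^ (2 * k - 1) * π ^ (2 * k) / ((2 * k).factorial : ℝ) := by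
    positivity
  have key : (0 : ℝ) < ((-1 : ℝ) ^ (k + 1) * ((bernoulli (2 * k) : ℚ) : ℝ)) *
      ((2 : ℝ) ^ (2 * k - 1) * π ^ (2 * k) / ((2 * k).factorial : ℝ)) := by
    calc (0:ℝ) < 1 := one_pos
    _ ≤ _ := by rw [show ((-1 : ℝ) ^ (k + 1) * ((bernoulli (2 * k) : ℚ) : ℝ)) *
        ((2 : ℝ) ^ (2 * k - 1) * π ^ (2 * k) / ((2 * k).factorial : ℝ)) =
        (-1 : ℝ) ^ (k + 1) * (2 : ℝ) ^ (2 * k - 1) * π ^ (2 * k) *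
        ((bernoulli (2 * k) : ℚ) : ℝ) / ((2 * k).factorial : ℝ) from by ring]; exact h1
  rcases mul_pos_iff.mp key with ⟨h', _⟩ | ⟨_, h'⟩
  · exact h'
  · linarith

lemma bern_abs {k : ℕ} (hk : k ≠ 0) :
    |((bernoulli (2 * k) : ℚ) : ℝ)| = (-1 : ℝ) ^ (k + 1) * ((bernoulli (2 * k) : ℚ) : ℝ) := by
  rcases Nat.even_or_odd (k + 1) with he | ho
  · have := bern_sign hk
    rw [he.neg_one_pow] at this ⊢
    rw [abs_of_pos (by linarith)]; ring
  · have := bern_sign hk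
    rw [ho.neg_one_pow] at this ⊢
    rw [abs_of_neg (by linarith)]; ring

lemma bern_bound {k : ℕ} (hk : k ≠ 0) :
    |((bernoulli (2 * k) : ℚ) : ℝ)| / ((2 * k).factorial : ℝ) ≤
      (π ^ 2 / 3) / (2 * π) ^ (2 * k) := by
  have h2k := hasSum_zeta_nat hk
  have h2 := hasSum_zeta_two
  have hle : (-1 : ℝ) ^ (k + 1) * (2 : ℝ) ^ (2 * k - 1) * π ^ (2 * k) *
      ((bernoulli (2 * k) : ℚ) : ℝ) / ((2 * k).factorial : ℝ) ≤ π ^ 2 / 6 := by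
    refine hasSum_le (fun n => ?_) h2k h2
    rcases Nat.eq_zero_or_pos n with rfl | hn
    · rw [Nat.cast_zero, zero_pow (by omega : 2 * k ≠ 0), zero_pow (by omega : 2 ≠ 0), div_zero]
    · have h1n : (1 : ℝ) ≤ (n : ℝ) := by exact_mod_cast hn
      have : (n : ℝ) ^ 2 ≤ (n : ℝ) ^ (2 * k) := pow_le_pow_right₀ h1n (by omega)
      exact div_le_div_of_nonneg_left one_pos.le (by positivity) this
  rw [bern_abs hk]
  have hpow : (2 : ℝ) ^ (2 * k - 1) * π ^ (2 * k) =
      (2 * π) ^ (2 * k) / 2 := by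
    rw [mul_pow, show (2:ℝ)^(2*k-1) = 2^(2*k)/2 from ?_]
    · ring
    · rw [eq_div_iff (two_ne_zero), ← pow_succ]
      congr 1; omega
  rw [div_le_div_iff₀ (by positivity) (by positivity)]
  have := hle
  rw [show (-1 : ℝ) ^ (k + 1) * (2 : ℝ) ^ (2 * k - 1) * π ^ (2 * k) *
      ((bernoulli (2 * k) : ℚ) : ℝ) / ((2 * k).factorial : ℝ) =
      ((-1 : ℝ) ^ (k+1) * ((bernoulli (2 * k) : ℚ) : ℝ)) *
      ((2 : ℝ) ^ (2 * k - 1) * π ^ (2 * k)) / ((2 * k).factorial : ℝ) from by ring,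
    hpow] at this
  have hfac : (0:ℝ) < ((2 * k).factorial : ℝ) := by positivity
  rw [div_le_iff₀ hfac] at this
  nlinarith [this]

lemma bern_term_le (n : ℕ) :
    |((bernoulli n : ℚ) : ℝ)| * 4 ^ n / (n.factorial : ℝ) ≤ (π ^ 2 / 3) * (2 / π) ^ n := by
  have hπ3 : (3 : ℝ) ≤ π := by linarith [Real.pi_gt_three]
  have hπ : (0 : ℝ) < π := by linarith
  match n with
  | 0 => simp; nlinarith
  | 1 =>
    simp only [bernoulli_one, Nat.factorial, pow_one, Nat.cast_one]
    rw [show |((-1/2 : ℚ) : ℝ)| = 1/2 from by norm_num,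
      show π ^ 2 / 3 * (2 / π) = 2 * π / 3 from by field_simp]
    norm_num
    linarith
  | (n + 2) =>
    rcases Nat.even_or_odd (n + 2) with ⟨k, hk⟩ | ho
    · have hk0 : k ≠ 0 := by omega
      have hb := bern_bound hk0
      have h2k : n + 2 = 2 * k := by omega
      rw [h2k]
      have h4 : (4 : ℝ) ^ (2 * k) = 4 ^ (2 * k) := rfl
      calc |((bernoulli (2*k) : ℚ) : ℝ)| * 4 ^ (2*k) / ((2*k).factorial : ℝ)
          = (|((bernoulli (2*k) : ℚ) : ℝ)| / ((2*k).factorial : ℝ)) * 4 ^ (2*k) := by ring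
        _ ≤ ((π ^ 2 / 3) / (2 * π) ^ (2 * k)) * 4 ^ (2*k) := by
            apply mul_le_mul_of_nonneg_right hb (by positivity)
        _ = (π ^ 2 / 3) * (2 / π) ^ (2*k) := by
            rw [show ((2:ℝ)/π) ^ (2*k) = 4 ^ (2*k) / (2*π) ^ (2*k) from by
              rw [← div_pow]; congr 1; field_simp; ring]
            ring
    · rw [bernoulli_eq_bernoulli'_of_ne_one (by omega),
        bernoulli'_eq_zero_of_odd ho (by omega)]
      simp
      positivity

lemma bernSummable : Summable (fun n : ℕ => |((bernoulli n : ℚ) : ℝ)| * 4 ^ n / (n.factorial : ℝ)) := by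
  have hπ : (0 : ℝ) < π := Real.pi_pos
  have hr : |(2 / π : ℝ)| < 1 := by
    rw [abs_of_pos (by positivity), div_lt_one hπ]; linarith [Real.pi_gt_three]
  refine Summable.of_nonneg_of_le (fun n => by positivity) bern_term_le ?_
  exact (summable_geometric_of_abs_lt_one hr).mul_left _

lemma bern_coeff_id (n : ℕ) :
    ∑ p ∈ antidiagonal n, (bernoulli p.1 / p.1.factorial) *
      ((1 : ℚ) / p.2.factorial - if p.2 = 0 then 1 else 0) =
    if n = 1 then 1 else 0 := by
  have h := congrArg (PowerSeries.coeff (R := ℚ) n) (bernoulliPowerSeries_mul_exp_sub_one ℚ)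
  rw [PowerSeries.coeff_mul, PowerSeries.coeff_X] at h
  rw [← h]
  apply Finset.sum_congr rfl
  intro p hp
  congr 1
  · simp [bernoulliPowerSeries]
  · rw [map_sub, PowerSeries.coeff_exp, PowerSeries.coeff_one]
    simp [Algebra.algebraMap_self]

lemma hasSum_bern (z : ℂ) (hz : ‖z‖ ≤ 4) (hz1 : Complex.exp z ≠ 1) :
    HasSum (fun n : ℕ => (bernoulli n : ℂ) / n.factorial * z ^ n)
      (z / (Complex.exp z - 1)) := by
  set f : ℕ → ℂ := fun n => (bernoulli n : ℂ) / n.factorial * z ^ n with hf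
  set e : ℕ → ℂ := fun n => z ^ n / n.factorial - if n = 0 then 1 else 0 with he
  have hfacn : ∀ n : ℕ, ‖((n.factorial : ℂ))‖ = (n.factorial : ℝ) := fun n =>
    Complex.norm_natCast _
  have hfnorm : Summable (fun n => ‖f n‖) := by
    apply Summable.of_nonneg_of_le (fun n => norm_nonneg _) _ bernSummable
    intro n
    simp only [hf, norm_mul, norm_div, norm_pow, Complex.norm_ratCast, hfacn]
    rw [div_mul_eq_mul_div]
    apply div_le_div_of_nonneg_right _ (by positivity)
    exact mul_le_mul_of_nonneg_left (pow_le_pow_left₀ (norm_nonneg z) hz n) (abs_nonneg _)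
  have hfs : Summable f := hfnorm.of_norm
  have henorm : Summable (fun n => ‖e n‖) := by
    apply Summable.of_nonneg_of_le (fun n => norm_nonneg _) _
      (Real.summable_pow_div_factorial ‖z‖)
    intro n
    match n with
    | 0 => simp [he]
    | (n + 1) =>
      simp only [he, if_neg (Nat.succ_ne_zero n), sub_zero, norm_div, norm_pow, hfacn]
      exact le_refl _
  have hE : HasSum e (Complex.exp z - 1) := by
    have h1 : HasSum (fun n : ℕ => z ^ n / n.factorial) (Complex.exp z) := by
      rw [Complex.exp_eq_exp_ℂ]
      exact NormedSpace.expSeries_div_hasSum_exp z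
    have h2 : HasSum (fun n : ℕ => if n = 0 then (1 : ℂ) else 0) 1 := hasSum_ite_eq 0 1
    exact h1.sub h2
  have hprod := tsum_mul_tsum_eq_tsum_sum_antidiagonal_of_summable_norm hfnorm henorm
  have inner : ∀ n : ℕ, ∑ p ∈ antidiagonal n, f p.1 * e p.2 = if n = 1 then z else 0 := by
    intro n
    have step : ∑ p ∈ antidiagonal n, f p.1 * e p.2 =
        ((∑ p ∈ antidiagonal n, (bernoulli p.1 / p.1.factorial) *
          ((1 : ℚ) / p.2.factorial - if p.2 = 0 then 1 else 0) : ℚ) : ℂ) * z ^ n := by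
      push_cast
      rw [Finset.sum_mul]
      apply Finset.sum_congr rfl
      intro p hp
      have hn := Finset.HasAntidiagonal.mem_antidiagonal.mp hp
      rw [← hn, pow_add]
      by_cases h0 : p.2 = 0
      · simp [hf, he, h0]
      · simp only [hf, he, if_neg h0]
        ring
    rw [step, bern_coeff_id n]
    by_cases h1 : n = 1 <;> simp [h1]
  rw [funext inner, tsum_ite_eq 1 (fun _ => z)] at hprod
  have hEne : Complex.exp z - 1 ≠ 0 := sub_ne_zero.mpr hz1
  rw [hE.tsum_eq] at hprod
  have htsum : ∑' n, f n = z / (Complex.exp z - 1) := by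
    rw [eq_div_iff hEne]; exact hprod
  exact htsum ▸ hfs.hasSum

noncomputable def acoef (k : ℕ) : ℝ :=
  ((bernoulli (2 * k) : ℚ) : ℝ) * (-4 : ℝ) ^ k / ((2 * k).factorial : ℝ)

lemma hasSum_xcot {x : ℝ} (hx0 : 0 < x) (hx2 : x < 2) :
    HasSum (fun k : ℕ => acoef k * x ^ (2 * k)) (x * Real.cos x / Real.sin x) := by
  have hπ3 : (3 : ℝ) < π := Real.pi_gt_three
  set z : ℂ := 2 * Complex.I * x with hzdef
  have hznorm : ‖z‖ ≤ 4 := by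
    rw [hzdef]
    simp only [norm_mul, Complex.norm_I, Complex.norm_real, Complex.norm_ofNat,
      Real.norm_eq_abs, abs_of_pos hx0]
    nlinarith
  have hz1 : Complex.exp z ≠ 1 := by
    intro hexp
    rw [Complex.exp_eq_one_iff] at hexp
    obtain ⟨n, hn⟩ := hexp
    rw [hzdef] at hn
    have him := congrArg Complex.im hn
    simp [Complex.mul_im, Complex.mul_re] at him
    -- him : 2 * x = n * (2 * π)  (some form)
    rcases le_or_gt 1 n with h1 | h1
    · have : (1 : ℝ) ≤ (n : ℝ) := by exact_mod_cast h1
      nlinarith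
    · have : (n : ℝ) ≤ 0 := by exact_mod_cast Int.lt_add_one_iff.mp h1
      nlinarith
  have hbern := hasSum_bern z hznorm hz1
  have hEne : Complex.exp z - 1 ≠ 0 := sub_ne_zero.mpr hz1
  -- remove the n = 1 term
  have h1 := hbern.update 1 0
  have hf1 : (bernoulli 1 : ℂ) / (Nat.factorial 1 : ℂ) * z ^ 1 = -(z / 2) := by
    simp only [bernoulli_one, Nat.factorial_one, Nat.cast_one, pow_one]; push_cast; ring
  -- reindex over even integers
  have hinj : Function.Injective (fun k : ℕ => 2 * k) := fun a b h => by dsimp at h; omega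
  have hsupp : ∀ n ∉ Set.range (fun k : ℕ => 2 * k),
      Function.update (fun n : ℕ => (bernoulli n : ℂ) / n.factorial * z ^ n) 1 0 n = 0 := by
    intro n hn
    have hodd : Odd n := by
      rcases Nat.even_or_odd n with he | ho
      · obtain ⟨m, hm⟩ := he
        exact absurd ⟨m, by show 2 * m = n; omega⟩ hn
      · exact ho
    rcases eq_or_ne n 1 with rfl | hne
    · simp
    · rw [Function.update_of_ne hne]
      rw [bernoulli_eq_bernoulli'_of_ne_one hne, bernoulli'_eq_zero_of_odd hodd (by
        rcases hodd with ⟨m, hm⟩; omega)]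
      simp
  have h2 := (Function.Injective.hasSum_iff hinj hsupp).mpr h1
  -- the even-index terms are the real coefficients
  have hterm : ∀ k : ℕ,
      Function.update (fun n : ℕ => (bernoulli n : ℂ) / n.factorial * z ^ n) 1 0 (2 * k) =
      ((acoef k * x ^ (2 * k) : ℝ) : ℂ) := by
    intro k
    rw [Function.update_of_ne (by omega : 2 * k ≠ 1)]
    rw [hzdef, acoef]
    rw [show ((2 : ℂ) * Complex.I * x) ^ (2 * k) = ((-4 : ℂ) * (x:ℂ) ^ 2) ^ k from by
      rw [pow_mul]; congr 1; rw [mul_pow, mul_pow, Complex.I_sq]; ring]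
    push_cast
    rw [mul_pow, ← pow_mul]
    ring
  -- identify the sum with x * cos x / sin x
  have hsin : Real.sin x ≠ 0 :=
    ne_of_gt (Real.sin_pos_of_pos_of_lt_pi hx0 (by linarith))
  have hsinC : Complex.sin x ≠ 0 := by
    rw [← Complex.ofReal_sin]
    exact_mod_cast hsin
  have hval : (0 : ℂ) - (bernoulli 1 : ℂ) / (Nat.factorial 1 : ℂ) * z ^ 1 +
      z / (Complex.exp z - 1) = ((x * Real.cos x / Real.sin x : ℝ) : ℂ) := by
    rw [hf1]
    have hcot : ((x * Real.cos x / Real.sin x : ℝ) : ℂ) = (x : ℂ) * Complex.cot x := by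
      push_cast [Complex.ofReal_cos, Complex.ofReal_sin]
      rw [Complex.cot_eq_cos_div_sin]
      ring
    rw [hcot, Complex.cot_eq_exp_ratio]
    rw [show (2 : ℂ) * Complex.I * (x : ℂ) = z from rfl]
    have hIE : Complex.I * (1 - Complex.exp z) ≠ 0 :=
      mul_ne_zero Complex.I_ne_zero (by
        intro h; apply hz1; linear_combination -h)
    field_simp
    ring_nf
    linear_combination (Complex.I - Complex.exp z ^ 2 * Complex.I) * hzdef +
      (-2 * (x:ℂ) * Complex.exp z ^ 2 + 2 * x) * Complex.I_sq
  rw [hval] at h2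
  rw [show (Function.update (fun n : ℕ => (bernoulli n : ℂ) / n.factorial * z ^ n) 1 0) ∘
      (fun k : ℕ => 2 * k) = fun k : ℕ => ((acoef k * x ^ (2 * k) : ℝ) : ℂ) from
    funext fun k => hterm k] at h2
  exact Complex.hasSum_ofReal.mp h2

lemma acoef_abs_le {n : ℕ} (hn : n ≠ 0) : |acoef n| ≤ (π ^ 2 / 3) / π ^ (2 * n) := by
  rw [acoef, abs_div, abs_mul, abs_pow, abs_neg, abs_of_nonneg (by positivity : (0:ℝ) ≤ (4:ℝ)),
    abs_of_nonneg (by positivity : (0:ℝ) ≤ ((2*n).factorial : ℝ))]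
  have hb := bern_bound hn
  have key : (2 * π) ^ (2 * n) = 4 ^ n * π ^ (2 * n) := by
    rw [mul_pow, pow_mul]; norm_num
  calc |((bernoulli (2*n) : ℚ) : ℝ)| * 4 ^ n / ((2*n).factorial : ℝ)
      = (|((bernoulli (2*n) : ℚ) : ℝ)| / ((2*n).factorial : ℝ)) * 4 ^ n := by ring
    _ ≤ ((π ^ 2 / 3) / (2 * π) ^ (2 * n)) * 4 ^ n := by
        exact mul_le_mul_of_nonneg_right hb (by positivity)
    _ = (π ^ 2 / 3) / π ^ (2 * n) := by
        rw [key]; field_simp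

lemma deriv_bound_summable :
    Summable (fun n : ℕ => |acoef n| * (2 * (n:ℝ)) * 2 ^ (2 * n - 1)) := by
  have hπ : (0:ℝ) < π := Real.pi_pos
  have hr : ‖(4 / π ^ 2 : ℝ)‖ < 1 := by
    rw [Real.norm_eq_abs, abs_of_pos (by positivity), div_lt_one (by positivity)]
    nlinarith [Real.pi_gt_three]
  have hs := (summable_pow_mul_geometric_of_norm_lt_one 1 hr).mul_left (2 * (π ^ 2 / 3))
  refine Summable.of_nonneg_of_le (fun n => by positivity) (fun n => ?_) hs
  match n with
  | 0 => simp
  | (m + 1) =>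
    set n := m + 1
    have hn : n ≠ 0 := Nat.succ_ne_zero m
    have h1 := acoef_abs_le hn
    have h2 : (2:ℝ) ^ (2 * n - 1) ≤ 2 ^ (2 * n) :=
      pow_le_pow_right₀ (by norm_num) (by omega)
    calc |acoef n| * (2 * (n:ℝ)) * 2 ^ (2 * n - 1)
        ≤ ((π ^ 2 / 3) / π ^ (2 * n)) * (2 * (n:ℝ)) * 2 ^ (2 * n) := by
          apply mul_le_mul _ h2 (by positivity) (by positivity)
          exact mul_le_mul_of_nonneg_right h1 (by positivity)
      _ = 2 * (π ^ 2 / 3) * ((n:ℝ) ^ 1 * (4 / π ^ 2) ^ n) := by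
          rw [div_pow, pow_mul]
          field_simp
          rw [show (4:ℝ) ^ n = 2 ^ (2 * n) from by
            rw [show (4:ℝ) = 2^2 from by norm_num, ← pow_mul]]

lemma hasSum_main {x : ℝ} (hx0 : 0 < x) (hx : x < π / 2) :
    HasSum (fun n : ℕ => (2 - 2 * (n:ℝ)) * acoef n * x ^ (2 * n))
      ((x / Real.sin x) ^ 2 + x * Real.cos x / Real.sin x) := by
  have hπ : π < 3.15 := Real.pi_lt_d2
  have hx2 : x < 2 := by linarith
  have hxt : x ∈ Set.Ioo (-2 : ℝ) 2 := ⟨by linarith, hx2⟩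
  have hsin : Real.sin x ≠ 0 :=
    ne_of_gt (Real.sin_pos_of_pos_of_lt_pi hx0 (by linarith [Real.pi_gt_three]))
  set g' : ℕ → ℝ → ℝ := fun n y => acoef n * ((2 * n : ℕ) * y ^ (2 * n - 1)) with hg'def
  have hbound : ∀ (n : ℕ) (y : ℝ), y ∈ Set.Ioo (-2 : ℝ) 2 →
      ‖g' n y‖ ≤ |acoef n| * (2 * (n:ℝ)) * 2 ^ (2 * n - 1) := by
    intro n y hy
    have hy2 : |y| ≤ 2 := by
      rw [abs_le]; exact ⟨hy.1.le, hy.2.le⟩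
    rw [hg'def]
    simp only [Real.norm_eq_abs, abs_mul]
    rw [abs_of_nonneg (by positivity : (0:ℝ) ≤ ((2 * n : ℕ) : ℝ))]
    push_cast
    rw [abs_pow]
    have hp := pow_le_pow_left₀ (abs_nonneg y) hy2 (2 * n - 1)
    have hn0 : (0:ℝ) ≤ (n:ℝ) := Nat.cast_nonneg n
    nlinarith [mul_le_mul_of_nonneg_left hp hn0, abs_nonneg (acoef n),
      mul_le_mul_of_nonneg_left (mul_le_mul_of_nonneg_left hp hn0) (abs_nonneg (acoef n))]
  have hderiv : ∀ (n : ℕ) (y : ℝ), y ∈ Set.Ioo (-2 : ℝ) 2 →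
      HasDerivAt (fun z : ℝ => acoef n * z ^ (2 * n)) (g' n y) y := by
    intro n y _
    exact (hasDerivAt_pow (2 * n) y).const_mul (acoef n)
  have hg0 : Summable (fun n : ℕ => acoef n * (0:ℝ) ^ (2 * n)) := by
    apply summable_of_ne_finset_zero (s := {0})
    intro n hn
    rw [zero_pow (by simp at hn; omega), mul_zero]
  have hF := hasDerivAt_tsum_of_isPreconnected deriv_bound_summable isOpen_Ioo
    (convex_Ioo (-2:ℝ) 2).isPreconnected hderiv hbound
    (Set.mem_Ioo.mpr ⟨by norm_num, by norm_num⟩ : (0:ℝ) ∈ Set.Ioo (-2:ℝ) 2) hg0 hxt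
  -- transfer to x * cos x / sin x
  have hEq : (fun z : ℝ => ∑' n, acoef n * z ^ (2 * n)) =ᶠ[nhds x]
      (fun z => z * Real.cos z / Real.sin z) := by
    filter_upwards [Ioo_mem_nhds hx0 hx2] with z hz
    exact (hasSum_xcot hz.1 hz.2).tsum_eq
  have hF2 : HasDerivAt (fun z => z * Real.cos z / Real.sin z) (∑' n, g' n x) x :=
    (Filter.EventuallyEq.hasDerivAt_iff hEq).mp hF
  have hF3 : HasDerivAt (fun z => z * Real.cos z / Real.sin z)
      (((1 * Real.cos x + x * -Real.sin x) * Real.sin x - x * Real.cos x * Real.cos x) /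
        Real.sin x ^ 2) x :=
    ((hasDerivAt_id x).mul (Real.hasDerivAt_cos x)).div (Real.hasDerivAt_sin x) hsin
  have hD : ∑' n, g' n x =
      ((1 * Real.cos x + x * -Real.sin x) * Real.sin x - x * Real.cos x * Real.cos x) /
        Real.sin x ^ 2 := hF2.unique hF3
  have hgsum : HasSum (fun n => g' n x) (∑' n, g' n x) := by
    refine Summable.hasSum ?_
    exact Summable.of_norm_bounded deriv_bound_summable (fun n => hbound n x hxt)
  have hmain := ((hasSum_xcot hx0 hx2).mul_left 2).sub (hgsum.mul_left x)
  have hfun : ∀ n : ℕ, 2 * (acoef n * x ^ (2 * n)) - x * g' n x =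
      (2 - 2 * (n:ℝ)) * acoef n * x ^ (2 * n) := by
    intro n
    rw [hg'def]
    match n with
    | 0 => push_cast; ring
    | (m + 1) =>
      have hx' : x * x ^ (2 * (m + 1) - 1) = x ^ (2 * (m + 1)) := by
        rw [show 2 * (m + 1) - 1 = 2 * m + 1 from by omega,
          show 2 * (m + 1) = 2 * m + 1 + 1 from by omega, pow_succ]
        ring
      push_cast
      linear_combination (-(2 * ((m:ℝ) + 1)) * acoef (m + 1)) * hx'
  have hval : 2 * (x * Real.cos x / Real.sin x) - x * (∑' n, g' n x) =
      (x / Real.sin x) ^ 2 + x * Real.cos x / Real.sin x := by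
    rw [hD]
    have hpyth := Real.sin_sq_add_cos_sq x
    field_simp
    linear_combination x * hpyth
  rw [funext hfun, hval] at hmain
  exact hmain

lemma wchE_eq {k : ℕ} (hk : k ≠ 0) : wchE k = (2 - 2 * (k:ℝ)) * acoef k := by
  rw [wchE, acoef, bern_abs hk,
    show (-4:ℝ) ^ k = (-1:ℝ) ^ k * 4 ^ k from by rw [← neg_one_mul, mul_pow]]
  ring

lemma acoef_zero : acoef 0 = 1 := by
  norm_num [acoef]

lemma wchE_pos {k : ℕ} (hk : 2 ≤ k) : 0 < wchE k := by
  have habs : 0 < |((bernoulli (2 * k) : ℚ) : ℝ)| := by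
    rw [bern_abs (by omega : k ≠ 0)]
    exact bern_sign (by omega)
  have h2 : (0:ℝ) < 2 * (k : ℝ) - 2 := by
    have : (2:ℝ) ≤ (k:ℝ) := by exact_mod_cast hk
    linarith
  rw [wchE]
  positivity

/-- For every `x ∈ (0, π/2)`,
`(x/sin x)² + x/tan x = 2 + Σ_{k=2}^∞ |B_{2k}|(2k-2)4^k/(2k)! · x^(2k)` (the sum below is
indexed so that `k + 2` runs over `2, 3, 4, …`), and all the coefficients are positive. -/
theorem x_div_sinx_sq_add_x_div_tanx_series :
    (∀ x ∈ Set.Ioo (0 : ℝ) (π / 2),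
      HasSum (fun k : ℕ => wchE (k + 2) * x ^ (2 * (k + 2)))
        ((x / Real.sin x) ^ 2 + x * Real.cos x / Real.sin x - 2)) ∧
    ∀ k : ℕ, 2 ≤ k → 0 < wchE k := by
  constructor
  · rintro x ⟨hx0, hx⟩
    have hmain := hasSum_main hx0 hx
    set c : ℕ → ℝ := fun n => (2 - 2 * (n:ℝ)) * acoef n * x ^ (2 * n) with hc
    have hsum2 : ∑ i ∈ range 2, c i = 2 := by
      rw [Finset.sum_range_succ, Finset.sum_range_one, hc]
      norm_num [acoef_zero]
    have h2 : HasSum (fun n : ℕ => c (n + 2))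
        ((x / Real.sin x) ^ 2 + x * Real.cos x / Real.sin x - 2) := by
      rw [hasSum_nat_add_iff 2, hsum2, sub_add_cancel]
      exact hmain
    refine h2.congr_fun fun k => ?_
    rw [hc]
    simp only []
    rw [wchE_eq (by omega : k + 2 ≠ 0)]
  · exact fun k hk => wchE_pos hk
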